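/- Let Γ be a group, K ⊆ Γ a finite subset, and F ⊆ Γ a finite subset. Define the K-interior of F as int_K(F) = {γ ∈ F : γK ⊆ F}. Then |F \ int_K(F)| ≤ |K| · |FK \ F|. -/

import Mathlib

open Pointwise

/-- For finite subsets `K, F` of a group `Γ`, the complement in `F` of the
`K`-interior `int_K(F) = {γ ∈ F : γK ⊆ F}` satisfies `|F \ int_K(F)| ≤ |K| ⬝ |FK \ F|`. -/
theorem card_sdiff_interior_le
    {Γ : Type*} [Group Γ] [DecidableEq Γ] (K F : Finset Γ) :
    (F \ F.filter (fun γ => ∀ k ∈ K, γ * k ∈ F)).card ≤ K.card * ((F * K) \ F).card := by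
  classical
  have h : ∀ γ ∈ F \ F.filter (fun γ => ∀ k ∈ K, γ * k ∈ F),
      ∃ k, k ∈ K ∧ γ * k ∈ (F * K) \ F := by
    intro γ hγ
    simp only [Finset.mem_sdiff, Finset.mem_filter, not_and, not_forall] at hγ
    obtain ⟨hF, h2⟩ := hγ
    obtain ⟨k, hk, hkF⟩ := h2 hF
    exact ⟨k, hk, Finset.mem_sdiff.2 ⟨Finset.mul_mem_mul hF hk, hkF⟩⟩
  choose f hf1 hf2 using h
  have := Finset.card_le_card_of_injOn
    (f := fun γ => if hγ : γ ∈ F \ F.filter (fun γ => ∀ k ∈ K, γ * k ∈ F)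
      then (f γ hγ, γ * f γ hγ) else (1, 1))
    (s := F \ F.filter (fun γ => ∀ k ∈ K, γ * k ∈ F))
    (t := K ×ˢ ((F * K) \ F)) ?_ ?_
  · simpa [Finset.card_product, mul_comm] using this
  · intro γ hγ
    rw [Finset.mem_coe] at hγ
    dsimp only
    rw [dif_pos hγ]
    exact Finset.mem_product.2 ⟨hf1 γ hγ, hf2 γ hγ⟩
  · intro a ha b hb hab
    rw [Finset.mem_coe] at ha hb
    dsimp only at hab
    rw [dif_pos ha, dif_pos hb, Prod.mk.injEq] at hab
    obtain ⟨h1, h2⟩ := hab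
    rw [h1] at h2
    exact mul_right_cancel h2
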